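/- Let T be a homeomorphism of a compact metric space X with the multishadowing property. Then every chain recurrent point is nonwandering, i.e., CR(X,T) = Ω(X,T). -/
import Mathlib


open Metric Filter Set Topology
open scoped Classical

variable {X : Type*}

/-- A set of naturals is syndetic: bounded gaps. -/
def Syndetic (S : Set ℕ) : Prop := ∃ n : ℕ, ∀ m : ℕ, ∃ k ∈ S, m ≤ k ∧ k ≤ m + n

/-- Forward orbit of a point. -/
def fwdOrbit (T : X → X) (y : X) : Set X := Set.range fun k : ℕ => T^[k] y

/-- A point is minimal (almost periodic): its forward orbit closure is a minimal set. -/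
def IsMinimalPt [TopologicalSpace X] (T : X → X) (y : X) : Prop :=
  ∀ z ∈ closure (fwdOrbit T y), closure (fwdOrbit T z) = closure (fwdOrbit T y)

/-- ℤ-iteration of a homeomorphism. -/
noncomputable def zIter [TopologicalSpace X] (T : X ≃ₜ X) (n : ℤ) : X → X :=
  if 0 ≤ n then (⇑T)^[n.toNat] else (⇑T.symm)^[(-n).toNat]

/-- `A` is an `ε`-network: every point of the space is within `ε` of `A`. -/
def IsNet [PseudoMetricSpace X] (ε : ℝ) (A : Set X) : Prop :=
  ∀ x : X, ∃ a ∈ A, dist x a ≤ ε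

/-- A point is nonwandering (w.r.t. forward iterates). -/
def NonWandering [TopologicalSpace X] (T : X → X) (x : X) : Prop :=
  ∀ U : Set X, IsOpen U → x ∈ U → ∃ k : ℕ, 1 ≤ k ∧ ((fun p => T^[k] p) '' U ∩ U).Nonempty

/-- One-sided `d`-pseudotrajectory. -/
def IsPseudoTraj [PseudoMetricSpace X] (T : X → X) (d : ℝ) (x : ℕ → X) : Prop :=
  ∀ k : ℕ, dist (x (k + 1)) (T (x k)) ≤ d

/-- Two-sided `d`-pseudotrajectory. -/
def IsPseudoTrajZ [PseudoMetricSpace X] (T : X → X) (d : ℝ) (x : ℤ → X) : Prop :=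
  ∀ k : ℤ, dist (x (k + 1)) (T (x k)) ≤ d

/-- A chain recurrent point. -/
def ChainRec [PseudoMetricSpace X] (T : X → X) (x : X) : Prop :=
  ∀ d > (0 : ℝ), ∃ n : ℕ, 1 ≤ n ∧ ∃ c : ℕ → X, c 0 = x ∧ c n = x ∧
    ∀ k < n, dist (c (k + 1)) (T (c k)) ≤ d

/-- ω-limit set of a point under a map. -/
def omegaSet [TopologicalSpace X] (T : X → X) (y : X) : Set X :=
  {p | ∃ φ : ℕ → ℕ, StrictMono φ ∧ Tendsto (fun n => T^[φ n] y) atTop (nhds p)}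

/-- The set of recurrent points (`x ∈ ω(x)`). -/
def RecurrentPts [TopologicalSpace X] (T : X → X) : Set X := {x | x ∈ omegaSet T x}

/-- The multishadowing property (for homeomorphisms, two-sided). -/
def Multishadowing [PseudoMetricSpace X] (T : X ≃ₜ X) : Prop :=
  ∀ ε > (0 : ℝ), ∃ d > (0 : ℝ), ∀ x : ℤ → X, IsPseudoTrajZ (⇑T) d x →
    ∃ Y : Finset X, ∀ k : ℤ, ∃ y ∈ Y, dist (x k) (zIter T k y) < ε

/-- Topological support of a measure: points all of whose open neighborhoods
have positive measure. -/
def msupp [TopologicalSpace X] [MeasurableSpace X] (μ : MeasureTheory.Measure X) : Set X :=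
  {x | ∀ U : Set X, IsOpen U → x ∈ U → 0 < μ U}

/-- Counting function for density computations. -/
noncomputable def cnt (K : Set ℕ) (N : ℕ) : ℝ :=
  ((Finset.range (N + 1)).filter (· ∈ K)).card


theorem stmt11 [MetricSpace X] [CompactSpace X] (T : X ≃ₜ X)
    (h : Multishadowing T) :
    {x : X | ChainRec (⇑T) x} = {x : X | NonWandering (⇑T) x} := by
  ext x
  simp only [Set.mem_setOf_eq]
  constructor
  · -- ChainRec → NonWandering, via multishadowing
    intro hx U hU hxU
    obtain ⟨ε, hε, hball⟩ := Metric.isOpen_iff.mp hU x hxU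
    obtain ⟨d, hd, hsh⟩ := h ε hε
    obtain ⟨n, hn, c, hc0, hcn, hc⟩ := hx d hd
    have hnpos : (0:ℤ) < (n:ℤ) := by exact_mod_cast hn
    have hpt : IsPseudoTrajZ (⇑T) d (fun k : ℤ => c ((k % (n:ℤ)).toNat)) := by
      intro k
      have h1 : (0:ℤ) ≤ k % (n:ℤ) := Int.emod_nonneg k hnpos.ne'
      have h2 : k % (n:ℤ) < (n:ℤ) := Int.emod_lt_of_pos k hnpos
      have hrlt : (k % (n:ℤ)).toNat < n := by omega
      have e1 : (k + 1) % (n:ℤ) = ((k % (n:ℤ)) + 1) % (n:ℤ) := by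
        rw [Int.add_emod, Int.add_emod (k % (n:ℤ)) 1, Int.emod_emod_of_dvd _ dvd_rfl]
      have e2 : c (((k+1) % (n:ℤ)).toNat) = c ((k % (n:ℤ)).toNat + 1) := by
        rcases eq_or_lt_of_le (Nat.succ_le_of_lt hrlt) with heq | hlt
        · have hn' : (k % (n:ℤ)) + 1 = (n:ℤ) := by omega
          rw [e1, hn', Int.emod_self]
          have heq' : (k % (n:ℤ)).toNat + 1 = n := heq
          rw [Int.toNat_zero, hc0, heq', hcn]
        · have hn' : (k % (n:ℤ)) + 1 < (n:ℤ) := by omega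
          rw [e1, Int.emod_eq_of_lt (by omega) hn']
          congr 1
          omega
      simp only []
      rw [e2]
      exact hc _ hrlt
    obtain ⟨Y, hY⟩ := hsh _ hpt
    have key : ∀ j : ℕ, ∃ y ∈ Y, dist x (T^[j * n] y) < ε := by
      intro j
      obtain ⟨y, hy, hdist⟩ := hY ((j * n : ℕ) : ℤ)
      refine ⟨y, hy, ?_⟩
      have e3 : (((j*n : ℕ):ℤ) % (n:ℤ)) = 0 := by
        have hdvd : (n:ℤ) ∣ ((j*n : ℕ):ℤ) := by
          push_cast
          exact ⟨(j:ℤ), mul_comm _ _⟩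
        exact Int.emod_eq_zero_of_dvd hdvd
      have e4 : zIter T ((j*n:ℕ):ℤ) y = T^[j*n] y := by
        rw [zIter, if_pos (by positivity)]
        norm_cast
      simp only [e3, Int.toNat_zero, hc0, e4] at hdist
      exact hdist
    choose g hgY hg using key
    have hcard : Y.card < (Finset.range (Y.card + 1)).card := by
      simp
    obtain ⟨j₁, hj₁s, j₂, hj₂s, hne, heq⟩ :=
      Finset.exists_ne_map_eq_of_card_lt_of_maps_to hcard (fun j _ => hgY j)
    have main : ∀ a b : ℕ, a < b → g a = g b →
        ∃ k : ℕ, 1 ≤ k ∧ (((fun p => T^[k] p) '' U) ∩ U).Nonempty := by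
      intro a b hab hgab
      refine ⟨(b - a) * n, Nat.mul_pos (by omega) hn, ?_⟩
      refine ⟨T^[(b-a)*n] (T^[a*n] (g a)), ⟨T^[a*n] (g a), ?_, rfl⟩, ?_⟩
      · apply hball
        rw [mem_ball, dist_comm]
        exact hg a
      · have e5 : (b-a)*n + a*n = b*n := by
          rw [← Nat.add_mul]
          congr 1
          omega
        rw [← Function.iterate_add_apply, e5]
        apply hball
        rw [mem_ball, dist_comm, hgab]
        exact hg b
    rcases hne.lt_or_gt with h' | h'
    · exact main j₁ j₂ h' heq
    · exact main j₂ j₁ h' heq.symm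
  · -- NonWandering → ChainRec
    intro hx d hd
    have hT : UniformContinuous (⇑T) :=
      CompactSpace.uniformContinuous_of_continuous T.continuous
    obtain ⟨δ0, hδ0, hδ0'⟩ := Metric.uniformContinuous_iff.mp hT (d/2) (by linarith)
    set δ := min (δ0/2) (d/2) with hδdef
    have hδpos : 0 < δ := lt_min (by linarith) (by linarith)
    have hδle : δ ≤ δ0/2 := min_le_left _ _
    have hδle2 : δ ≤ d/2 := min_le_right _ _
    obtain ⟨k, hk, z, hz⟩ := hx (ball x δ) isOpen_ball (mem_ball_self hδpos)
    obtain ⟨⟨p, hpU, rfl⟩, hzU⟩ := hz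
    have hpx : dist p x < δ := mem_ball.mp hpU
    have hTpTx : dist (T p) (T x) < d/2 := hδ0' (by linarith)
    rcases eq_or_lt_of_le hk with hk1 | hk2
    · -- k = 1
      have hTpx : dist (T p) x < δ := by
        have := mem_ball.mp hzU
        rwa [← hk1, Function.iterate_one] at this
      refine ⟨2, by norm_num, fun j => if j = 1 then T p else x, by norm_num, by norm_num, ?_⟩
      intro j hj
      interval_cases j
      · norm_num
        linarith
      · norm_num
        have h1 : dist x (T p) < δ := by rw [dist_comm]; exact hTpx
        have h2 : dist (T p) (T (T p)) < d/2 := hδ0' (by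
          have := dist_triangle p x (T p)
          linarith)
        have := dist_triangle x (T p) (T (T p))
        linarith
    · -- k ≥ 2
      refine ⟨k, hk, fun j => if j = 0 ∨ k ≤ j then x else T^[j] p,
        by simp, by simp, ?_⟩
      intro j hj
      show dist (if j + 1 = 0 ∨ k ≤ j + 1 then x else (⇑T)^[j+1] p)
          (T (if j = 0 ∨ k ≤ j then x else (⇑T)^[j] p)) ≤ d
      rcases Nat.eq_zero_or_pos j with rfl | hjpos
      · rw [if_neg (by omega), if_pos (Or.inl rfl)]
        simp only [Nat.zero_add, Function.iterate_one]
        linarith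
      · rcases eq_or_lt_of_le (Nat.succ_le_of_lt hj) with hlast | hmid
        · rw [if_pos (Or.inr (le_of_eq hlast.symm)), if_neg (by omega)]
          have : dist (T^[k] p) x < δ := mem_ball.mp hzU
          rw [← Function.iterate_succ_apply' (⇑T) j p, hlast]
          rw [dist_comm] at this
          linarith
        · rw [if_neg (by omega), if_neg (by omega)]
          rw [Function.iterate_succ_apply' (⇑T) j p, dist_self]
          exact hd.le
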